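/- Let G be a finite group acting on a finite fiber bundle (Z,T,π) (i.e., acting on Z and T with π equivariant) and acting on ℂ^d via a projective unitary representation U. If M is a G-covariant measurement assemblage on (Z,T,π), then η^g(M) = max{η ∈ [0,1] : η·M + (1−η)·N is compatible for some G-covariant measurement assemblage N}. That is, the optimal noise in the definition of the robustness can be taken G-covariant. -/

import Mathlib

open Matrix Complex Finset
open scoped ComplexOrder

noncomputable section

/-- A measurement assemblage on the finite fiber bundle `π : Z → T`: positive semidefinite
effects summing to the identity on each fiber. -/
def IsAssemblage {d : ℕ} {Z T : Type} [Fintype Z] [DecidableEq T] (π : Z → T)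
    (M : Z → Matrix (Fin d) (Fin d) ℂ) : Prop :=
  (∀ z, (M z).PosSemidef) ∧
    ∀ t : T, ∑ z ∈ Finset.univ.filter (fun z => π z = t), M z = 1

/-- A compatible assemblage: there is a POVM on the set of sections of the bundle whose
suitable margins reproduce the assemblage. -/
def CompatibleAsm {d : ℕ} {Z T : Type} [Fintype Z] [Fintype T] [DecidableEq T] [DecidableEq Z]
    (π : Z → T) (M : Z → Matrix (Fin d) (Fin d) ℂ) : Prop :=
  ∃ J : {s : T → Z // ∀ t, π (s t) = t} → Matrix (Fin d) (Fin d) ℂ,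
    (∀ s, (J s).PosSemidef) ∧ (∑ s, J s = 1) ∧
    ∀ z, M z = ∑ s ∈ Finset.univ.filter
        (fun s : {s : T → Z // ∀ t, π (s t) = t} => s.1 (π z) = z), J s

/-- The generalized incompatibility robustness of a measurement assemblage. -/
def etaGAsm {d : ℕ} {Z T : Type} [Fintype Z] [Fintype T] [DecidableEq T] [DecidableEq Z]
    (π : Z → T) (M : Z → Matrix (Fin d) (Fin d) ℂ) : ℝ :=
  sSup {η : ℝ | η ∈ Set.Icc 0 1 ∧ ∃ N, IsAssemblage π N ∧
    CompatibleAsm π (fun z => (η : ℂ) • M z + ((1 - η : ℝ) : ℂ) • N z)}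

/-- `G`-covariance of an assemblage with respect to a projective unitary representation `U`. -/
def CovariantAsm {d : ℕ} {Z : Type} (G : Type) [Group G] [MulAction G Z]
    (U : G → Matrix (Fin d) (Fin d) ℂ) (M : Z → Matrix (Fin d) (Fin d) ℂ) : Prop :=
  ∀ (g : G) (z : Z), M (g • z) = U g * M z * (U g)ᴴ

-- Auxiliary lemmas

lemma quad_single {d : ℕ} (A : Matrix (Fin d) (Fin d) ℂ) (i j : Fin d) (c : ℂ) :
    star ((Pi.single i 1 : Fin d → ℂ) + c • (Pi.single j 1 : Fin d → ℂ)) ⬝ᵥ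
      A *ᵥ ((Pi.single i 1 : Fin d → ℂ) + c • (Pi.single j 1 : Fin d → ℂ))
      = A i i + c * A i j + star c * A j i + star c * c * A j j := by
  simp [Matrix.mulVec_add, Matrix.mulVec_smul, Matrix.mulVec_single, add_dotProduct,
    smul_dotProduct, single_dotProduct, star_add, star_smul, ← Pi.single_star, Pi.single_apply,
    mul_add, add_mul]
  ring

lemma quad_single0 {d : ℕ} (A : Matrix (Fin d) (Fin d) ℂ) (i : Fin d) :
    star (Pi.single i 1 : Fin d → ℂ) ⬝ᵥ A *ᵥ (Pi.single i 1 : Fin d → ℂ) = A i i := by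
  simp [Matrix.mulVec_single, ← Pi.single_star, single_dotProduct]

lemma psd_entry_le {d : ℕ} {A : Matrix (Fin d) (Fin d) ℂ} (hA : A.PosSemidef)
    (hA1 : (1 - A).PosSemidef) (i j : Fin d) : ‖A i j‖ ≤ 1 := by
  have hdiag : ∀ k, 0 ≤ (A k k).re ∧ (A k k).im = 0 ∧ (A k k).re ≤ 1 := by
    intro k
    have h1 : 0 ≤ A k k := by rw [← quad_single0 A k]; exact hA.dotProduct_mulVec_nonneg _
    have h2 : 0 ≤ (1 - A) k k := by rw [← quad_single0 (1 - A) k]; exact hA1.dotProduct_mulVec_nonneg _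
    rw [Complex.nonneg_iff] at h1 h2
    simp only [Matrix.sub_apply, Matrix.one_apply_eq, Complex.sub_re] at h2
    exact ⟨h1.1, h1.2.symm, by simpa using h2.1⟩
  by_cases hij : i = j
  · subst hij
    have := hdiag i
    rw [Complex.norm_def, Complex.normSq_apply, this.2.1]
    simp only [mul_zero, add_zero]
    rw [Real.sqrt_mul_self_eq_abs, _root_.abs_of_nonneg this.1]
    exact this.2.2
  · by_cases h0 : A i j = 0
    · simp [h0]
    set r : ℝ := ‖A i j‖ with hr
    have hrpos : 0 < r := by simpa [hr] using norm_pos_iff.mpr h0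
    set c : ℂ := star (A i j) / (r : ℂ) with hc
    have hji : A j i = star (A i j) := by
      conv_lhs => rw [← hA.1]
      simp [Matrix.conjTranspose_apply]
    have hcA : c * A i j = (r : ℂ) := by
      rw [hc]
      rw [div_mul_eq_mul_div, Complex.star_def, mul_comm, Complex.mul_conj]
      rw [Complex.normSq_eq_norm_sq, ← hr]
      push_cast
      field_simp
    have hcA' : star c * A j i = (r : ℂ) := by
      rw [hc, hji]
      simp only [star_div₀, star_star, Complex.star_def, Complex.conj_ofReal, Complex.conj_conj]
      rw [div_mul_eq_mul_div, Complex.mul_conj]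
      rw [Complex.normSq_eq_norm_sq, ← hr]
      push_cast
      field_simp
    have hcc : star c * c = 1 := by
      rw [hc]
      simp only [star_div₀, star_star, Complex.star_def, Complex.conj_ofReal, Complex.conj_conj]
      rw [div_mul_div_comm, Complex.mul_conj, Complex.normSq_eq_norm_sq, ← hr]
      push_cast
      field_simp
    set x : Fin d → ℂ := (Pi.single i 1 : Fin d → ℂ) + c • (Pi.single j 1 : Fin d → ℂ) with hx
    have hval : star x ⬝ᵥ (1 - A) *ᵥ x = 2 - A i i - A j j - 2 * (r : ℂ) := by
      rw [hx, quad_single]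
      simp only [Matrix.sub_apply, Matrix.one_apply_eq, Matrix.one_apply_ne hij,
        Matrix.one_apply_ne (Ne.symm hij)]
      rw [hcc]
      linear_combination -hcA - hcA'
    have hpos := hA1.dotProduct_mulVec_nonneg x
    rw [hval, Complex.nonneg_iff] at hpos
    have hre := hpos.1
    simp only [Complex.sub_re, Complex.mul_re, Complex.ofReal_re, Complex.ofReal_im] at hre
    norm_num at hre
    have d1 := hdiag i
    have d2 := hdiag j
    linarith [d1.1, d2.1]

lemma psd_smul_real {d : ℕ} (c : ℝ) (hc : 0 ≤ c) {A : Matrix (Fin d) (Fin d) ℂ}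
    (hA : A.PosSemidef) : ((c : ℂ) • A).PosSemidef := by
  refine Matrix.PosSemidef.of_dotProduct_mulVec_nonneg ?_ ?_
  · unfold Matrix.IsHermitian
    rw [Matrix.conjTranspose_smul, hA.1]
    simp
  · intro x
    rw [Matrix.smul_mulVec, dotProduct_smul]
    exact mul_nonneg (by exact_mod_cast Complex.zero_le_real.2 hc) (hA.dotProduct_mulVec_nonneg x)

lemma psd_sum {d : ℕ} {ι : Type*} (s : Finset ι) (f : ι → Matrix (Fin d) (Fin d) ℂ)
    (h : ∀ i ∈ s, (f i).PosSemidef) : (∑ i ∈ s, f i).PosSemidef :=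
  Finset.sum_induction f _ (fun _ _ ha hb => ha.add hb) Matrix.PosSemidef.zero h

lemma psd_sub_of_mem {d : ℕ} {ι : Type*} [DecidableEq ι] {s : Finset ι}
    {f : ι → Matrix (Fin d) (Fin d) ℂ} (h : ∀ i ∈ s, (f i).PosSemidef)
    {A : Matrix (Fin d) (Fin d) ℂ} (hsum : ∑ i ∈ s, f i = A) {j : ι} (hj : j ∈ s) :
    (A - f j).PosSemidef := by
  have : A - f j = ∑ i ∈ s.erase j, f i := by
    rw [Finset.sum_erase_eq_sub hj, hsum]
  rw [this]
  exact psd_sum _ _ (fun i hi => h i (Finset.mem_of_mem_erase hi))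

lemma isClosed_psd {d : ℕ} : IsClosed {A : Matrix (Fin d) (Fin d) ℂ | A.PosSemidef} := by
  have : {A : Matrix (Fin d) (Fin d) ℂ | A.PosSemidef} =
      {A | A.IsHermitian} ∩ ⋂ x : Fin d → ℂ, {A | 0 ≤ star x ⬝ᵥ A *ᵥ x} := by
    ext A; simp only [Set.mem_setOf_eq, Set.mem_inter_iff, Set.mem_iInter]
    exact ⟨fun h => ⟨h.1, h.dotProduct_mulVec_nonneg⟩, fun h => Matrix.PosSemidef.of_dotProduct_mulVec_nonneg h.1 h.2⟩
  rw [this]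
  apply IsClosed.inter
  · have : {A : Matrix (Fin d) (Fin d) ℂ | A.IsHermitian} = {A | Aᴴ = A} := rfl
    rw [this]
    exact isClosed_eq (continuous_id.matrix_conjTranspose) continuous_id
  · apply isClosed_iInter
    intro x
    have hc : Continuous fun A : Matrix (Fin d) (Fin d) ℂ => star x ⬝ᵥ A *ᵥ x :=
      (continuous_const.dotProduct (continuous_id.matrix_mulVec continuous_const))
    exact IsClosed.preimage hc (isClosed_le continuous_const continuous_id)

lemma exists_compatible {d : ℕ} {Z T : Type} [Fintype Z] [Fintype T] [DecidableEq T]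
    [DecidableEq Z] (π : Z → T) (hsurj : Function.Surjective π) :
    ∃ N : Z → Matrix (Fin d) (Fin d) ℂ, IsAssemblage π N ∧ CompatibleAsm π N := by
  classical
  haveI : Nonempty {s : T → Z // ∀ t, π (s t) = t} :=
    ⟨⟨fun t => (hsurj t).choose, fun t => (hsurj t).choose_spec⟩⟩
  set Sec := {s : T → Z // ∀ t, π (s t) = t}
  have hCpos : 0 < (Fintype.card Sec : ℝ) := by
    exact_mod_cast Fintype.card_pos
  refine ⟨fun z => ((((univ.filter (fun s : Sec => s.1 (π z) = z)).card : ℝ) /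
      (Fintype.card Sec : ℝ) : ℝ) : ℂ) • 1, ⟨?_, ?_⟩, ?_⟩
  · intro z
    exact psd_smul_real _ (by positivity) Matrix.PosSemidef.one
  · intro t
    have hcongr : ∀ z ∈ univ.filter (fun z => π z = t),
        ((((univ.filter (fun s : Sec => s.1 (π z) = z)).card : ℝ) /
          (Fintype.card Sec : ℝ) : ℝ) : ℂ) • (1 : Matrix (Fin d) (Fin d) ℂ)
        = ((((univ.filter (fun s : Sec => s.1 t = z)).card : ℝ) /
          (Fintype.card Sec : ℝ) : ℝ) : ℂ) • 1 := by
      intro z hz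
      rw [Finset.mem_filter] at hz
      rw [hz.2]
    rw [Finset.sum_congr rfl hcongr, ← Finset.sum_smul]
    have hpart : ∑ z ∈ univ.filter (fun z => π z = t),
        ((univ.filter (fun s : Sec => s.1 t = z)).card : ℝ) = (Fintype.card Sec : ℝ) := by
      rw [← Nat.cast_sum]
      norm_cast
      rw [Fintype.card, Finset.card_eq_sum_card_fiberwise
        (f := fun s : Sec => s.1 t) (t := univ.filter (fun z => π z = t))]
      intro s _
      simp [s.2 t]
    rw [← Complex.ofReal_sum, ← Finset.sum_div, hpart, div_self (ne_of_gt hCpos)]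
    simp
  · refine ⟨fun _ => (((Fintype.card Sec : ℝ)⁻¹ : ℝ) : ℂ) • 1, ?_, ?_, ?_⟩
    · intro s
      exact psd_smul_real _ (by positivity) Matrix.PosSemidef.one
    · rw [Finset.sum_const, Finset.card_univ, ← Nat.cast_smul_eq_nsmul ℂ, smul_smul]
      rw [show ((Fintype.card Sec : ℂ)) * (((Fintype.card Sec : ℝ)⁻¹ : ℝ) : ℂ) = 1 by
        push_cast; field_simp]
      simp
    · intro z
      rw [Finset.sum_const, ← Nat.cast_smul_eq_nsmul ℂ, smul_smul]
      congr 1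
      push_cast
      rw [div_eq_mul_inv, mul_comm]

/-- The feasible set is compact and nonempty, hence its sup is attained. -/
lemma sSup_mem_feasible {d : ℕ} {Z T : Type} [Fintype Z] [Fintype T] [DecidableEq T]
    [DecidableEq Z] (π : Z → T) (hsurj : Function.Surjective π)
    (M : Z → Matrix (Fin d) (Fin d) ℂ) :
    sSup {η : ℝ | η ∈ Set.Icc 0 1 ∧ ∃ N, IsAssemblage π N ∧
        CompatibleAsm π (fun z => (η : ℂ) • M z + ((1 - η : ℝ) : ℂ) • N z)} ∈
      {η : ℝ | η ∈ Set.Icc 0 1 ∧ ∃ N, IsAssemblage π N ∧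
        CompatibleAsm π (fun z => (η : ℂ) • M z + ((1 - η : ℝ) : ℂ) • N z)} := by
  classical
  set Sec := {s : T → Z // ∀ t, π (s t) = t} with hSecdef
  set S := {η : ℝ | η ∈ Set.Icc 0 1 ∧ ∃ N, IsAssemblage π N ∧
      CompatibleAsm π (fun z => (η : ℂ) • M z + ((1 - η : ℝ) : ℂ) • N z)} with hSdef
  -- ambient space
  set X := ℝ × (Z → Fin d → Fin d → ℂ) × (Sec → Fin d → Fin d → ℂ) with hXdef
  set K : Set X := {x | x.1 ∈ Set.Icc (0:ℝ) 1
    ∧ (∀ z, (Matrix.of (x.2.1 z)).PosSemidef)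
    ∧ (∀ t : T, ∑ z ∈ univ.filter (fun z => π z = t), Matrix.of (x.2.1 z) = 1)
    ∧ (∀ s, (Matrix.of (x.2.2 s)).PosSemidef)
    ∧ ((∑ s, Matrix.of (x.2.2 s)) = 1)
    ∧ ∀ z, (x.1:ℂ) • M z + ((1 - x.1 : ℝ):ℂ) • Matrix.of (x.2.1 z)
        = ∑ s ∈ univ.filter (fun s : Sec => s.1 (π z) = z), Matrix.of (x.2.2 s)} with hKdef
  have hSK : S = Prod.fst '' K := by
    ext η
    constructor
    · rintro ⟨hIcc, N, ⟨hNpsd, hNsum⟩, J, hJpsd, hJsum, hJmarg⟩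
      exact ⟨(η, fun z => N z, fun s => J s), ⟨hIcc, hNpsd, hNsum, hJpsd, hJsum,
        fun z => hJmarg z⟩, rfl⟩
    · rintro ⟨⟨η', N, J⟩, ⟨hIcc, hNpsd, hNsum, hJpsd, hJsum, hJmarg⟩, rfl⟩
      exact ⟨hIcc, fun z => Matrix.of (N z), ⟨hNpsd, hNsum⟩,
        fun s => Matrix.of (J s), hJpsd, hJsum, fun z => (hJmarg z).symm ▸ rfl⟩
  have hKclosed : IsClosed K := by
    have h1 : IsClosed {x : X | x.1 ∈ Set.Icc (0:ℝ) 1} :=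
      IsClosed.preimage continuous_fst isClosed_Icc
    have h2 : IsClosed {x : X | ∀ z, (Matrix.of (x.2.1 z)).PosSemidef} := by
      rw [Set.setOf_forall]
      refine isClosed_iInter fun z => ?_
      have hc : Continuous fun x : X => Matrix.of (x.2.1 z) :=
        (continuous_apply z).comp (continuous_fst.comp continuous_snd)
      exact IsClosed.preimage hc isClosed_psd
    have h3 : IsClosed {x : X | ∀ t : T,
        ∑ z ∈ univ.filter (fun z => π z = t), Matrix.of (x.2.1 z) = 1} := by
      rw [Set.setOf_forall]
      refine isClosed_iInter fun t => ?_
      have hc : Continuous fun x : X => ∑ z ∈ univ.filter (fun z => π z = t),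
          Matrix.of (x.2.1 z) :=
        continuous_finset_sum _ fun z _ =>
          (continuous_apply z).comp (continuous_fst.comp continuous_snd)
      exact isClosed_eq hc continuous_const
    have h4 : IsClosed {x : X | ∀ s, (Matrix.of (x.2.2 s)).PosSemidef} := by
      rw [Set.setOf_forall]
      refine isClosed_iInter fun s => ?_
      have hc : Continuous fun x : X => Matrix.of (x.2.2 s) :=
        (continuous_apply s).comp (continuous_snd.comp continuous_snd)
      exact IsClosed.preimage hc isClosed_psd
    have h5 : IsClosed {x : X | (∑ s, Matrix.of (x.2.2 s)) = 1} := by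
      have hc : Continuous fun x : X => ∑ s, Matrix.of (x.2.2 s) :=
        continuous_finset_sum _ fun s _ =>
          (continuous_apply s).comp (continuous_snd.comp continuous_snd)
      exact isClosed_eq hc continuous_const
    have h6 : IsClosed {x : X | ∀ z, (x.1:ℂ) • M z + ((1 - x.1 : ℝ):ℂ) • Matrix.of (x.2.1 z)
        = ∑ s ∈ univ.filter (fun s : Sec => s.1 (π z) = z), Matrix.of (x.2.2 s)} := by
      rw [Set.setOf_forall]
      refine isClosed_iInter fun z => ?_
      have hc1 : Continuous fun x : X => ((x.1 : ℂ) : ℂ) • M z :=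
        ((Complex.continuous_ofReal.comp continuous_fst).smul continuous_const)
      have hc2 : Continuous fun x : X => ((1 - x.1 : ℝ) : ℂ) • Matrix.of (x.2.1 z) :=
        ((Complex.continuous_ofReal.comp (continuous_const.sub continuous_fst)).smul
          ((continuous_apply z).comp (continuous_fst.comp continuous_snd)))
      have hc3 : Continuous fun x : X => ∑ s ∈ univ.filter (fun s : Sec => s.1 (π z) = z),
          Matrix.of (x.2.2 s) :=
        continuous_finset_sum _ fun s _ =>
          (continuous_apply s).comp (continuous_snd.comp continuous_snd)
      exact isClosed_eq (hc1.add hc2) hc3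
    have hKeq : K = {x : X | x.1 ∈ Set.Icc (0:ℝ) 1} ∩ ({x | ∀ z, (Matrix.of (x.2.1 z)).PosSemidef}
        ∩ ({x : X | ∀ t : T, ∑ z ∈ univ.filter (fun z => π z = t), Matrix.of (x.2.1 z) = 1}
        ∩ ({x : X | ∀ s, (Matrix.of (x.2.2 s)).PosSemidef}
        ∩ ({x : X | (∑ s, Matrix.of (x.2.2 s)) = 1}
        ∩ {x : X | ∀ z, (x.1:ℂ) • M z + ((1 - x.1 : ℝ):ℂ) • Matrix.of (x.2.1 z)
        = ∑ s ∈ univ.filter (fun s : Sec => s.1 (π z) = z), Matrix.of (x.2.2 s)})))) := by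
      ext x
      simp only [hKdef, Set.mem_setOf_eq, Set.mem_inter_iff]
    rw [hKeq]
    exact h1.inter (h2.inter (h3.inter (h4.inter (h5.inter h6))))
  have hKbdd : Bornology.IsBounded K := by
    apply Bornology.IsBounded.subset (Metric.isBounded_closedBall (x := (0:X)) (r := 1))
    rintro ⟨η, N, J⟩ ⟨hIcc, hNpsd, hNsum, hJpsd, hJsum, _⟩
    rw [Metric.mem_closedBall, dist_zero_right]
    rw [Prod.norm_def]
    apply max_le
    · rw [Real.norm_eq_abs, abs_le]
      exact ⟨le_trans (by norm_num) hIcc.1, hIcc.2⟩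
    rw [Prod.norm_def]
    apply max_le
    · rw [pi_norm_le_iff_of_nonneg zero_le_one]
      intro z
      rw [pi_norm_le_iff_of_nonneg zero_le_one]
      intro i
      rw [pi_norm_le_iff_of_nonneg zero_le_one]
      intro j
      have hz : z ∈ univ.filter (fun z' => π z' = π z) := by
        simp
      exact psd_entry_le (hNpsd z)
        (psd_sub_of_mem (fun z' _ => hNpsd z') (hNsum (π z)) hz) i j
    · rw [pi_norm_le_iff_of_nonneg zero_le_one]
      intro s
      rw [pi_norm_le_iff_of_nonneg zero_le_one]
      intro i
      rw [pi_norm_le_iff_of_nonneg zero_le_one]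
      intro j
      exact psd_entry_le (hJpsd s)
        (psd_sub_of_mem (fun s' _ => hJpsd s') hJsum (Finset.mem_univ s)) i j
  have hKcomp : IsCompact K := Metric.isCompact_of_isClosed_isBounded hKclosed hKbdd
  have hScomp : IsCompact S := by
    rw [hSK]; exact hKcomp.image continuous_fst
  have hSne : S.Nonempty := by
    obtain ⟨N, hN, hNc⟩ := exists_compatible (d := d) π hsurj
    refine ⟨0, ⟨le_refl 0, zero_le_one⟩, N, hN, ?_⟩
    have : (fun z => ((0:ℝ) : ℂ) • M z + ((1 - (0:ℝ) : ℝ) : ℂ) • N z) = N := by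
      funext z; simp
    rw [this]
    exact hNc
  exact hScomp.sSup_mem hSne

/-- The action of `G` on sections of the bundle. -/
def secAct {Z T G : Type} [Group G] [MulAction G Z] [MulAction G T] (π : Z → T)
    (hequiv : ∀ (g : G) (z : Z), π (g • z) = g • π z) (g : G)
    (s : {s : T → Z // ∀ t, π (s t) = t}) : {s : T → Z // ∀ t, π (s t) = t} :=
  ⟨fun t => g • s.1 (g⁻¹ • t), fun t => by rw [hequiv, s.2, smul_inv_smul]⟩

/-- for a `G`-covariant assemblage on a finite `G`-bundle, the optimal noise in
the definition of the incompatibility robustness can be taken `G`-covariant: the robustness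
is the greatest feasible visibility achievable with `G`-covariant noise assemblages. -/
theorem stmt_12 {d : ℕ} {Z T G : Type} [Fintype Z] [Fintype T] [DecidableEq T] [DecidableEq Z]
    [Group G] [Fintype G] [MulAction G Z] [MulAction G T]
    (π : Z → T) (hsurj : Function.Surjective π)
    (hequiv : ∀ (g : G) (z : Z), π (g • z) = g • π z)
    (U : G → Matrix (Fin d) (Fin d) ℂ)
    (hU : ∀ g, U g ∈ Matrix.unitaryGroup (Fin d) ℂ)
    (hUproj : ∀ g h : G, ∃ c : ℂ, ‖c‖ = 1 ∧ U (g * h) = c • (U g * U h))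
    (M : Z → Matrix (Fin d) (Fin d) ℂ)
    (hM : IsAssemblage π M) (hMcov : CovariantAsm G U M) :
    IsGreatest
      {η : ℝ | η ∈ Set.Icc 0 1 ∧ ∃ N, IsAssemblage π N ∧ CovariantAsm G U N ∧
        CompatibleAsm π (fun z => (η : ℂ) • M z + ((1 - η : ℝ) : ℂ) • N z)}
      (etaGAsm π M) := by
  classical
  have hU1 : ∀ g : G, U g * (U g)ᴴ = 1 := by
    intro g
    have := (Matrix.mem_unitaryGroup_iff).1 (hU g)
    rwa [Matrix.star_eq_conjTranspose] at this
  have hconj_mul : ∀ (g h : G) (A : Matrix (Fin d) (Fin d) ℂ),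
      U (g * h) * A * (U (g * h))ᴴ = U g * (U h * A * (U h)ᴴ) * (U g)ᴴ := by
    intro g h A
    obtain ⟨c, hc1, hc2⟩ := hUproj g h
    have hcc : c * star c = 1 := by
      rw [Complex.star_def, Complex.mul_conj]
      norm_cast
      rw [Complex.normSq_eq_norm_sq, hc1]; norm_num
    rw [hc2, Matrix.conjTranspose_smul, smul_mul_assoc, smul_mul_assoc, mul_smul_comm,
      smul_smul, hcc, one_smul, Matrix.conjTranspose_mul]
    simp only [Matrix.mul_assoc]
  set Sec := {s : T → Z // ∀ t, π (s t) = t} with hSecdef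
  have hσσ : ∀ (g : G) (s : Sec), secAct π hequiv g (secAct π hequiv g⁻¹ s) = s := by
    intro g s
    apply Subtype.ext
    funext t
    show g • (g⁻¹ • s.1 ((g⁻¹)⁻¹ • (g⁻¹ • t))) = s.1 t
    rw [inv_inv, smul_inv_smul, smul_inv_smul]
  have hσσ' : ∀ (g : G) (s : Sec), secAct π hequiv g⁻¹ (secAct π hequiv g s) = s := by
    intro g s
    have := hσσ g⁻¹ s
    rwa [inv_inv] at this
  obtain ⟨hIcc, N, hN, hcomp⟩ := sSup_mem_feasible π hsurj M
  obtain ⟨J, hJpsd, hJsum, hJmarg⟩ := hcomp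
  unfold etaGAsm
  set η : ℝ := sSup {η : ℝ | η ∈ Set.Icc 0 1 ∧ ∃ N, IsAssemblage π N ∧
    CompatibleAsm π (fun z => (η : ℂ) • M z + ((1 - η : ℝ) : ℂ) • N z)} with hη
  constructor
  · -- membership with covariant noise
    set n : ℂ := (Fintype.card G : ℂ) with hn
    have hn0 : n ≠ 0 := Nat.cast_ne_zero.2 Fintype.card_ne_zero
    set k : ℂ := n⁻¹ with hk
    have hkreal : k = (((Fintype.card G : ℝ)⁻¹ : ℝ) : ℂ) := by
      rw [hk, hn]; push_cast; ring
    have hkpos : (0:ℝ) ≤ (Fintype.card G : ℝ)⁻¹ := by positivity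
    have hkcard : ∀ A : Matrix (Fin d) (Fin d) ℂ, k • ((Fintype.card G) • A) = A := by
      intro A
      rw [← Nat.cast_smul_eq_nsmul ℂ, smul_smul, hk, hn, inv_mul_cancel₀ hn0, one_smul]
    have hpull : ∀ (g : G) {ι : Type} (F : Finset ι) (f : ι → Matrix (Fin d) (Fin d) ℂ),
        ∑ x ∈ F, U g * f x * (U g)ᴴ = U g * (∑ x ∈ F, f x) * (U g)ᴴ := by
      intro g ι F f
      rw [Finset.mul_sum, Finset.sum_mul]
    have hfib : ∀ (g : G) (t : T) (f : Z → Matrix (Fin d) (Fin d) ℂ),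
        ∑ z ∈ univ.filter (fun z => π z = t), f (g⁻¹ • z)
          = ∑ w ∈ univ.filter (fun w => π w = g⁻¹ • t), f w := by
      intro g t f
      refine Finset.sum_nbij' (fun z => g⁻¹ • z) (fun w => g • w) ?_ ?_ ?_ ?_ ?_
      · intro a ha
        simp only [Finset.mem_filter, Finset.mem_univ, true_and] at ha ⊢
        rw [hequiv, ha]
      · intro a ha
        simp only [Finset.mem_filter, Finset.mem_univ, true_and] at ha ⊢
        rw [hequiv, ha, smul_inv_smul]
      · intro a _; exact smul_inv_smul g a
      · intro a _; exact inv_smul_smul g a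
      · intro a _; rfl
    have hsecb : ∀ (g : G) (z : Z) (f : Sec → Matrix (Fin d) (Fin d) ℂ),
        ∑ s ∈ univ.filter (fun s : Sec => s.1 (π z) = z), f (secAct π hequiv g⁻¹ s)
          = ∑ s ∈ univ.filter (fun s : Sec => s.1 (π (g⁻¹ • z)) = g⁻¹ • z), f s := by
      intro g z f
      refine Finset.sum_nbij' (secAct π hequiv g⁻¹) (secAct π hequiv g) ?_ ?_ ?_ ?_ ?_
      · intro s hs
        simp only [Finset.mem_filter, Finset.mem_univ, true_and] at hs ⊢
        show g⁻¹ • s.1 ((g⁻¹)⁻¹ • π (g⁻¹ • z)) = g⁻¹ • z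
        rw [inv_inv, hequiv, smul_inv_smul, hs]
      · intro s hs
        simp only [Finset.mem_filter, Finset.mem_univ, true_and] at hs ⊢
        show g • s.1 (g⁻¹ • π z) = z
        rw [← hequiv, hs, smul_inv_smul]
      · intro s _; exact hσσ g s
      · intro s _; exact hσσ' g s
      · intro s _; rfl
    refine ⟨hIcc, fun z => k • ∑ g : G, U g * N (g⁻¹ • z) * (U g)ᴴ, ⟨?_, ?_⟩, ?_, ?_⟩
    · -- PSD
      intro z
      rw [hkreal]
      exact psd_smul_real _ hkpos (psd_sum _ _ fun g _ =>
        (hN.1 (g⁻¹ • z)).mul_mul_conjTranspose_same (U g))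
    · -- fiber sums
      intro t
      calc ∑ z ∈ univ.filter (fun z => π z = t), k • ∑ g : G, U g * N (g⁻¹ • z) * (U g)ᴴ
          = k • ∑ z ∈ univ.filter (fun z => π z = t), ∑ g : G, U g * N (g⁻¹ • z) * (U g)ᴴ :=
            Finset.smul_sum.symm
        _ = k • ∑ g : G, ∑ z ∈ univ.filter (fun z => π z = t), U g * N (g⁻¹ • z) * (U g)ᴴ := by
            rw [Finset.sum_comm]
        _ = k • ∑ _g : G, (1 : Matrix (Fin d) (Fin d) ℂ) := by
            congr 1
            refine Finset.sum_congr rfl fun g _ => ?_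
            rw [hpull g, hfib g t N, hN.2, mul_one, hU1]
        _ = 1 := by rw [Finset.sum_const, Finset.card_univ, hkcard]
    · -- covariance
      intro h z
      have hres : ∑ g : G, U g * N (g⁻¹ • (h • z)) * (U g)ᴴ
          = ∑ x : G, U h * (U x * N (x⁻¹ • z) * (U x)ᴴ) * (U h)ᴴ := by
        refine (Fintype.sum_equiv (Equiv.mulLeft h)
          (fun x : G => U h * (U x * N (x⁻¹ • z) * (U x)ᴴ) * (U h)ᴴ)
          (fun x : G => U x * N (x⁻¹ • (h • z)) * (U x)ᴴ) fun x => ?_).symm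
        show U h * (U x * N (x⁻¹ • z) * (U x)ᴴ) * (U h)ᴴ
            = U (h * x) * N ((h * x)⁻¹ • h • z) * (U (h * x))ᴴ
        rw [show (h * x)⁻¹ • h • z = x⁻¹ • z by rw [_root_.mul_inv_rev, mul_smul, inv_smul_smul],
          hconj_mul]
      show k • ∑ g : G, U g * N (g⁻¹ • (h • z)) * (U g)ᴴ
          = U h * (k • ∑ g : G, U g * N (g⁻¹ • z) * (U g)ᴴ) * (U h)ᴴ
      rw [hres, mul_smul_comm, smul_mul_assoc, Finset.mul_sum, Finset.sum_mul]
    · -- compatibility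
      refine ⟨fun s => k • ∑ g : G, U g * J (secAct π hequiv g⁻¹ s) * (U g)ᴴ, ?_, ?_, ?_⟩
      · intro s
        rw [hkreal]
        exact psd_smul_real _ hkpos (psd_sum _ _ fun g _ =>
          (hJpsd _).mul_mul_conjTranspose_same (U g))
      · rw [← Finset.smul_sum, Finset.sum_comm]
        have : ∀ g : G, (∑ s : Sec, U g * J (secAct π hequiv g⁻¹ s) * (U g)ᴴ) = 1 := by
          intro g
          rw [hpull g]
          have hre : (∑ s : Sec, J (secAct π hequiv g⁻¹ s)) = ∑ s : Sec, J s :=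
            Fintype.sum_equiv ⟨secAct π hequiv g⁻¹, secAct π hequiv g, hσσ g, hσσ' g⟩
              _ _ fun s => rfl
          rw [hre, hJsum, mul_one, hU1]
        rw [Finset.sum_congr rfl fun g _ => this g, Finset.sum_const, Finset.card_univ, hkcard]
      · -- margins
        intro z
        rw [← Finset.smul_sum, Finset.sum_comm]
        have hinner : ∀ g : G,
            (∑ s ∈ univ.filter (fun s : Sec => s.1 (π z) = z),
              U g * J (secAct π hequiv g⁻¹ s) * (U g)ᴴ)
            = (η : ℂ) • M z + ((1 - η : ℝ) : ℂ) • (U g * N (g⁻¹ • z) * (U g)ᴴ) := by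
          intro g
          rw [hpull g, hsecb g z J, ← hJmarg (g⁻¹ • z)]
          have hMz : U g * M (g⁻¹ • z) * (U g)ᴴ = M z := by
            have := hMcov g (g⁻¹ • z)
            rw [smul_inv_smul] at this
            exact this.symm
          rw [Matrix.mul_add, Matrix.add_mul, mul_smul_comm, mul_smul_comm,
            smul_mul_assoc, smul_mul_assoc, hMz]
        rw [Finset.sum_congr rfl fun g _ => hinner g, Finset.sum_add_distrib,
          Finset.sum_const, Finset.card_univ, smul_add, hkcard, ← Finset.smul_sum,
          smul_comm k]
  · -- upper bound
    rintro x ⟨hx1, Nx, hNx, _, hcompx⟩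
    exact le_csSup ⟨1, fun y hy => hy.1.2⟩ ⟨hx1, Nx, hNx, hcompx⟩
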